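/- Let m > 0, d > 0, r real, and set b = 2d. Then the function t ↦ (exp(-(d/b) * m^(-d/b) * r * t^(d/b - 1)) - 1) * t + (d/b) * m^(-d/b) * r * t^(d/b) + (exp(-(d²/b²) * m^(-d/b) * r * t^(d/b - 1)) - 1) * m^(-d/b) * r * t^(d/b) tends to -r²/(8m) as t → ∞. -/

import Mathlib

open Filter Real Topology

private lemma exp_bound3 {y : ℝ} (hy : |y| ≤ 1) :
    |Real.exp y - 1 - y - y ^ 2 / 2| ≤ 2 / 9 * |y| ^ 3 := by
  have h := Real.exp_bound hy (by norm_num : 0 < 3)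
  have hsum : ∑ m ∈ Finset.range 3, y ^ m / m.factorial = 1 + y + y ^ 2 / 2 := by
    norm_num [Finset.sum_range_succ]
  rw [hsum] at h
  calc |Real.exp y - 1 - y - y ^ 2 / 2| = |Real.exp y - (1 + y + y ^ 2 / 2)| := by ring_nf
    _ ≤ |y| ^ 3 * ((3:ℕ).succ / ((3:ℕ).factorial * 3)) := h
    _ = 2 / 9 * |y| ^ 3 := by norm_num [Nat.factorial]; ring

private lemma exp_bound2' {y : ℝ} (hy : |y| ≤ 1) :
    |Real.exp y - 1 - y| ≤ 3 / 4 * |y| ^ 2 := by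
  have h := Real.exp_bound hy (by norm_num : 0 < 2)
  have hsum : ∑ m ∈ Finset.range 2, y ^ m / m.factorial = 1 + y := by
    norm_num [Finset.sum_range_succ]
  rw [hsum] at h
  calc |Real.exp y - 1 - y| = |Real.exp y - (1 + y)| := by ring_nf
    _ ≤ |y| ^ 2 * ((2:ℕ).succ / ((2:ℕ).factorial * 2)) := h
    _ = 3 / 4 * |y| ^ 2 := by norm_num [Nat.factorial]; ring

private lemma tendsto_k_rpow (k : ℝ) :
    Filter.Tendsto (fun t : ℝ => k * t ^ (-(1/2) : ℝ)) atTop (𝓝 0) := by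
  have h := (tendsto_rpow_neg_atTop (by norm_num : (0:ℝ) < 1/2)).const_mul k
  rw [mul_zero] at h
  exact h

private lemma eventually_abs_le_one (k : ℝ) :
    ∀ᶠ t : ℝ in atTop, |k * t ^ (-(1/2) : ℝ)| ≤ 1 := by
  have h := (tendsto_k_rpow k).eventually (eventually_abs_sub_lt 0 one_pos)
  filter_upwards [h] with t ht
  simpa using ht.le

private lemma rpow_cube_mul {t : ℝ} (ht : 0 < t) :
    (t ^ (-(1/2) : ℝ)) ^ 3 * t = t ^ (-(1/2) : ℝ) := by
  rw [← Real.rpow_natCast (t ^ (-(1/2):ℝ)) 3, ← Real.rpow_mul ht.le,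
    ← Real.rpow_add_one ht.ne']
  norm_num

private lemma rpow_sq_mul {t : ℝ} (ht : 0 < t) :
    (t ^ (-(1/2) : ℝ)) ^ 2 * t ^ ((1/2) : ℝ) = t ^ (-(1/2) : ℝ) := by
  rw [← Real.rpow_natCast (t ^ (-(1/2):ℝ)) 2, ← Real.rpow_mul ht.le,
    ← Real.rpow_add ht]
  norm_num

private lemma aux3 (k : ℝ) :
    Filter.Tendsto (fun t : ℝ =>
      (Real.exp (k * t ^ (-(1/2) : ℝ)) - 1 - k * t ^ (-(1/2) : ℝ)
        - (k * t ^ (-(1/2) : ℝ)) ^ 2 / 2) * t) atTop (𝓝 0) := by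
  apply squeeze_zero_norm'
    (a := fun t : ℝ => 2 / 9 * |k| ^ 3 * t ^ (-(1/2) : ℝ))
  · filter_upwards [eventually_abs_le_one k, eventually_gt_atTop (0:ℝ)] with t habs ht
    have hb := exp_bound3 habs
    have htr : (0:ℝ) ≤ t ^ (-(1/2):ℝ) := Real.rpow_nonneg ht.le _
    rw [norm_mul, Real.norm_eq_abs, Real.norm_eq_abs, abs_of_pos ht]
    calc |Real.exp (k * t ^ (-(1/2):ℝ)) - 1 - k * t ^ (-(1/2):ℝ)
          - (k * t ^ (-(1/2):ℝ)) ^ 2 / 2| * t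
        ≤ 2 / 9 * |k * t ^ (-(1/2):ℝ)| ^ 3 * t := mul_le_mul_of_nonneg_right hb ht.le
      _ = 2 / 9 * |k| ^ 3 * ((t ^ (-(1/2):ℝ)) ^ 3 * t) := by
          rw [abs_mul, abs_of_nonneg htr]; ring
      _ = 2 / 9 * |k| ^ 3 * t ^ (-(1/2):ℝ) := by rw [rpow_cube_mul ht]
  · have h := (tendsto_rpow_neg_atTop (by norm_num : (0:ℝ) < 1/2)).const_mul
      (2 / 9 * |k| ^ 3)
    rw [mul_zero] at h
    exact h

private lemma aux2 (k : ℝ) :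
    Filter.Tendsto (fun t : ℝ =>
      (Real.exp (k * t ^ (-(1/2) : ℝ)) - 1 - k * t ^ (-(1/2) : ℝ))
        * t ^ ((1/2) : ℝ)) atTop (𝓝 0) := by
  apply squeeze_zero_norm'
    (a := fun t : ℝ => 3 / 4 * |k| ^ 2 * t ^ (-(1/2) : ℝ))
  · filter_upwards [eventually_abs_le_one k, eventually_gt_atTop (0:ℝ)] with t habs ht
    have hb := exp_bound2' habs
    have htr : (0:ℝ) ≤ t ^ (-(1/2):ℝ) := Real.rpow_nonneg ht.le _
    have htr2 : (0:ℝ) ≤ t ^ ((1/2):ℝ) := Real.rpow_nonneg ht.le _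
    rw [norm_mul, Real.norm_eq_abs, Real.norm_eq_abs, abs_of_nonneg htr2]
    calc |Real.exp (k * t ^ (-(1/2):ℝ)) - 1 - k * t ^ (-(1/2):ℝ)| * t ^ ((1/2):ℝ)
        ≤ 3 / 4 * |k * t ^ (-(1/2):ℝ)| ^ 2 * t ^ ((1/2):ℝ) :=
          mul_le_mul_of_nonneg_right hb htr2
      _ = 3 / 4 * |k| ^ 2 * ((t ^ (-(1/2):ℝ)) ^ 2 * t ^ ((1/2):ℝ)) := by
          rw [abs_mul, abs_of_nonneg htr]; ring
      _ = 3 / 4 * |k| ^ 2 * t ^ (-(1/2):ℝ) := by rw [rpow_sq_mul ht]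
  · have h := (tendsto_rpow_neg_atTop (by norm_num : (0:ℝ) < 1/2)).const_mul
      (3 / 4 * |k| ^ 2)
    rw [mul_zero] at h
    exact h

theorem limit_exponent_of_b_eq_two_d
    (m b d r : ℝ) (hm : 0 < m) (hd : 0 < d) (hb : b = 2 * d) :
    Filter.Tendsto
      (fun t : ℝ =>
        (Real.exp (-(d / b) * m ^ (-(d / b)) * r * t ^ (d / b - 1)) - 1) * t
          + (d / b) * m ^ (-(d / b)) * r * t ^ (d / b)
          + (Real.exp (-(d ^ 2 / b ^ 2) * m ^ (-(d / b)) * r * t ^ (d / b - 1)) - 1)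
              * m ^ (-(d / b)) * r * t ^ (d / b))
      Filter.atTop (nhds (-(r ^ 2) / (8 * m))) := by
  have hd' : d ≠ 0 := hd.ne'
  have h1 : d / b = (1:ℝ)/2 := by rw [hb]; field_simp
  have h2 : d ^ 2 / b ^ 2 = (1:ℝ)/4 := by rw [hb]; field_simp; ring
  have hsub : (1:ℝ)/2 - 1 = -(1/2) := by norm_num
  set c : ℝ := m ^ (-(1/2) : ℝ) * r with hc
  have hcsq : c ^ 2 = r ^ 2 / m := by
    rw [hc, mul_pow, ← Real.rpow_natCast (m ^ (-(1/2):ℝ)) 2, ← Real.rpow_mul hm.le]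
    norm_num [Real.rpow_neg_one]
    ring
  have hA : Filter.Tendsto (fun t : ℝ =>
      (Real.exp (-(c/2) * t ^ (-(1/2):ℝ)) - 1) * t + (c/2) * t ^ ((1/2):ℝ))
      atTop (𝓝 (c ^ 2 / 8)) := by
    have h := (aux3 (-(c/2))).add_const (c ^ 2 / 8)
    rw [zero_add] at h
    apply h.congr'
    filter_upwards [eventually_gt_atTop (0:ℝ)] with t ht
    have key : t ^ (-(1/2):ℝ) * t = t ^ ((1/2):ℝ) := by
      rw [← Real.rpow_add_one ht.ne']; norm_num
    have key2 : (t ^ (-(1/2):ℝ)) ^ 2 * t = 1 := by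
      rw [← Real.rpow_natCast (t ^ (-(1/2):ℝ)) 2, ← Real.rpow_mul ht.le,
        ← Real.rpow_add_one ht.ne']
      norm_num
    have expand : (Real.exp (-(c/2) * t ^ (-(1/2):ℝ)) - 1 - (-(c/2)) * t ^ (-(1/2):ℝ)
        - ((-(c/2)) * t ^ (-(1/2):ℝ)) ^ 2 / 2) * t + c ^ 2 / 8
        = (Real.exp (-(c/2) * t ^ (-(1/2):ℝ)) - 1) * t + (c/2) * (t ^ (-(1/2):ℝ) * t)
          - c ^ 2 / 8 * ((t ^ (-(1/2):ℝ)) ^ 2 * t) + c ^ 2 / 8 := by ring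
    rw [expand, key, key2]
    ring
  have hB : Filter.Tendsto (fun t : ℝ =>
      (Real.exp (-(c/4) * t ^ (-(1/2):ℝ)) - 1) * c * t ^ ((1/2):ℝ))
      atTop (𝓝 (-(c ^ 2) / 4)) := by
    have h := ((aux2 (-(c/4))).const_mul c).add_const (-(c ^ 2) / 4)
    rw [mul_zero, zero_add] at h
    apply h.congr'
    filter_upwards [eventually_gt_atTop (0:ℝ)] with t ht
    have key : t ^ (-(1/2):ℝ) * t ^ ((1/2):ℝ) = 1 := by
      rw [← Real.rpow_add ht]; norm_num
    have expand : c * ((Real.exp (-(c/4) * t ^ (-(1/2):ℝ)) - 1 - (-(c/4)) * t ^ (-(1/2):ℝ))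
        * t ^ ((1/2):ℝ)) + -(c ^ 2) / 4
        = (Real.exp (-(c/4) * t ^ (-(1/2):ℝ)) - 1) * c * t ^ ((1/2):ℝ)
          + c ^ 2 / 4 * (t ^ (-(1/2):ℝ) * t ^ ((1/2):ℝ)) + -(c ^ 2) / 4 := by ring
    rw [expand, key]
    ring
  have hsum := hA.add hB
  have hlim : c ^ 2 / 8 + -(c ^ 2) / 4 = -(r ^ 2) / (8 * m) := by
    rw [hcsq]; field_simp; ring
  rw [hlim] at hsum
  apply hsum.congr
  intro t
  simp only [h1, h2, hsub]
  have e1 : -((1:ℝ)/2) * m ^ (-(1/2):ℝ) * r * t ^ (-(1/2):ℝ) = -(c/2) * t ^ (-(1/2):ℝ) := by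
    rw [hc]; ring
  have e2 : -((1:ℝ)/4) * m ^ (-(1/2):ℝ) * r * t ^ (-(1/2):ℝ) = -(c/4) * t ^ (-(1/2):ℝ) := by
    rw [hc]; ring
  rw [e1, e2, hc]
  ring
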